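/- Let s, r, ω ∈ ℝ, and let y ∈ ℝ³ with y ≠ S and y ≠ R, where S = (s, 0, 0) and R = (0, 0, r). Set A = ‖y−S‖ and B = ‖y−R‖. Then the determinant of the 3×3 real matrix with rows (−(y₂²+y₃²)ω/A³, y₁(y₃−r)ω/B³, (y₁−s)/A + y₁/B), (y₂(y₁−s)ω/A³, y₂(y₃−r)ω/B³, y₂/A + y₂/B), and (y₃(y₁−s)ω/A³, −(y₁²+y₂²)ω/B³, y₃/A + (y₃−r)/B) equals −(ω²·y₂/(A²B²))·((y₁(y₁−s)+y₂²+y₃²)/A + (y₁²+y₂²+y₃(y₃−r))/B), and the expression in the last parentheses equals ⟨y, (y−S)/A + (y−R)/B⟩. -/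

import Mathlib

set_option maxHeartbeats 2000000 in
/-- Determinant of the Jacobian `D(η₁,η₂,η₃)/D(s,r,ω)` of the right projection
`π_R` of the canonical relation for the walkaway geometry with constant background
sound speed, together with the identification of the bracketed factor as
`⟨y, (y−S)/A + (y−R)/B⟩`. -/
theorem walkaway_det_dpiR
    (s r ω : ℝ) (y S R : EuclideanSpace ℝ (Fin 3))
    (hS : S = ![s, 0, 0]) (hR : R = ![0, 0, r])
    (hyS : y ≠ S) (hyR : y ≠ R)
    (A B : ℝ) (hA : A = ‖y - S‖) (hB : B = ‖y - R‖) :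
    (!![-((y 1) ^ 2 + (y 2) ^ 2) * ω / A ^ 3,
        y 0 * (y 2 - r) * ω / B ^ 3,
        (y 0 - s) / A + y 0 / B;
        y 1 * (y 0 - s) * ω / A ^ 3,
        y 1 * (y 2 - r) * ω / B ^ 3,
        y 1 / A + y 1 / B;
        y 2 * (y 0 - s) * ω / A ^ 3,
        -((y 0) ^ 2 + (y 1) ^ 2) * ω / B ^ 3,
        y 2 / A + (y 2 - r) / B]).det
      = -(ω ^ 2 * y 1 / (A ^ 2 * B ^ 2)) *
          ((y 0 * (y 0 - s) + (y 1) ^ 2 + (y 2) ^ 2) / A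
            + ((y 0) ^ 2 + (y 1) ^ 2 + y 2 * (y 2 - r)) / B)
      ∧ (y 0 * (y 0 - s) + (y 1) ^ 2 + (y 2) ^ 2) / A
          + ((y 0) ^ 2 + (y 1) ^ 2 + y 2 * (y 2 - r)) / B
        = (inner ℝ y (A⁻¹ • (y - S) + B⁻¹ • (y - R)) : ℝ) := by
  have hA0 : A ≠ 0 := by rw [hA]; simpa [sub_eq_zero] using hyS
  have hB0 : B ≠ 0 := by rw [hB]; simpa [sub_eq_zero] using hyR
  have hA2 : A ^ 2 = (y 0 - s) ^ 2 + (y 1) ^ 2 + (y 2) ^ 2 := by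
    rw [hA, EuclideanSpace.norm_eq, Real.sq_sqrt (by positivity)]
    simp [Fin.sum_univ_three, hS, Real.norm_eq_abs, sq_abs]
  have hB2 : B ^ 2 = (y 0) ^ 2 + (y 1) ^ 2 + (y 2 - r) ^ 2 := by
    rw [hB, EuclideanSpace.norm_eq, Real.sq_sqrt (by positivity)]
    simp [Fin.sum_univ_three, hR, Real.norm_eq_abs, sq_abs]
  constructor
  · rw [Matrix.det_fin_three]
    simp [Matrix.vecTail]
    field_simp
    linear_combination (ω ^ 2 * y 1 * B *
          ((y 0) ^ 2 + (y 1) ^ 2 + y 2 * (y 2 - r))) * hA2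
      + (ω ^ 2 * y 1 * A *
          (y 0 * (y 0 - s) + (y 1) ^ 2 + (y 2) ^ 2)) * hB2
  · simp only [hS, hR, PiLp.inner_apply, Fin.sum_univ_three, PiLp.add_apply, PiLp.smul_apply,
      PiLp.sub_apply, smul_eq_mul, RCLike.inner_apply, conj_trivial,
      Matrix.cons_val_zero, Matrix.cons_val_one, Matrix.head_cons,
      Matrix.cons_val_two, Matrix.tail_cons]
    field_simp
    ring
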